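/- If a Banach space B over ℂ is not separable, then every function φ in C(ℝ, B) is mean periodic; that is, the closed linear span of the translates of φ is a proper subset of C(ℝ, B). -/
import Mathlib

open Topology

/-- The translate of a continuous function `φ : ℝ → B` by `t`, i.e. `s ↦ φ (s + t)`. -/
noncomputable def translateBy {B : Type*} [NormedAddCommGroup B] [NormedSpace ℂ B]
    (φ : C(ℝ, B)) (t : ℝ) : C(ℝ, B) :=
  φ.comp ⟨fun s => s + t, by continuity⟩

/-- `tau φ` is the closure in `C(ℝ, B)` (compact-open topology) of the linear span of
all translates of `φ`. -/
noncomputable def tau {B : Type*} [NormedAddCommGroup B] [NormedSpace ℂ B]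
    (φ : C(ℝ, B)) : Set C(ℝ, B) :=
  closure (Submodule.span ℂ (Set.range (translateBy φ)) : Set C(ℝ, B))

/-- If a Banach space `B` over `ℂ` is not separable, then every `φ ∈ C(ℝ, B)` is
mean periodic: the closed linear span of the translates of `φ` is a proper subset
of `C(ℝ, B)`. -/
theorem all_meanPeriodic_of_not_separable
    (B : Type*) [NormedAddCommGroup B] [NormedSpace ℂ B] [CompleteSpace B]
    (h : ¬ TopologicalSpace.SeparableSpace B) :
    ∀ φ : C(ℝ, B), tau φ ≠ Set.univ := by
  intro φ htau
  -- The closed span of the range of φ is separable.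
  set S : Set B := closure (Submodule.span ℂ (Set.range φ) : Set B) with hS
  have hSsep : TopologicalSpace.IsSeparable S :=
    ((TopologicalSpace.isSeparable_range φ.continuous).span).closure
  -- There is b ∉ S, else B would be separable.
  have hb : ∃ b : B, b ∉ S := by
    by_contra hb
    push_neg at hb
    exact h (TopologicalSpace.isSeparable_univ_iff.1
      (hSsep.mono fun x _ => hb x))
  obtain ⟨b, hb⟩ := hb
  -- Evaluation at 0 as a linear map.
  let E : C(ℝ, B) →ₗ[ℂ] B :=
    { toFun := fun f => f 0
      map_add' := fun f g => rfl
      map_smul' := fun c f => rfl }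
  have hEcont : Continuous E := continuous_eval_const 0
  -- tau φ ⊆ E ⁻¹' S
  have hsub : tau φ ⊆ E ⁻¹' S := by
    have hclosed : IsClosed (E ⁻¹' S) := isClosed_closure.preimage hEcont
    apply closure_minimal ?_ hclosed
    intro f hf
    have : E f ∈ Submodule.span ℂ (Set.range φ) := by
      have hmap : Submodule.map E (Submodule.span ℂ (Set.range (translateBy φ)))
          ≤ Submodule.span ℂ (Set.range φ) := by
        rw [Submodule.map_span, Submodule.span_le]
        rintro x ⟨y, ⟨t, rfl⟩, rfl⟩
        exact Submodule.subset_span ⟨0 + t, rfl⟩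
      exact hmap ⟨f, hf, rfl⟩
    exact subset_closure this
  -- The constant function b contradicts this.
  have : (ContinuousMap.const ℝ b) ∈ tau φ := htau ▸ Set.mem_univ _
  exact hb (hsub this)
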